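/- Let y : J → ℝ be a differentiable function on an open interval J ⊆ ℝ∖{0,1} satisfying y'(x) = −y(x)(y(x)−1)/(x(x−1)) for all x ∈ J, and suppose Δ(x,y(x)) ≠ 0 on J. Then y is twice differentiable and satisfies equation (24): y''(x) + [x(x−1)·P_y]/Δ·(y'(x))³ + [(P_x − Q_y)x² + (Q_y − P_x − 2P)x + P_y·y² − (2P + P_y)·y + 2P]/Δ·(y'(x))² + [−Q_x·x² + (Q_x + 2Q)x + (P_x − Q_y)y² + (2Q − P_x + Q_y)y − 2Q]/Δ·y'(x) + [y(1−y)·Q_x]/Δ = 0 for all x ∈ J, where all coefficient functions are evaluated at (x, y(x)). -/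

import Mathlib

/-- Partial derivative with respect to the first argument. -/
noncomputable def pdx (F : ℝ × ℝ → ℝ) (p : ℝ × ℝ) : ℝ := fderiv ℝ F p (1, 0)

/-- Partial derivative with respect to the second argument. -/
noncomputable def pdy (F : ℝ × ℝ → ℝ) (p : ℝ × ℝ) : ℝ := fderiv ℝ F p (0, 1)

/-- `Δ(x,y) = y²P − yP + x²Q − xQ`. -/
noncomputable def Delta (P Q : ℝ × ℝ → ℝ) (p : ℝ × ℝ) : ℝ :=
  p.2 ^ 2 * P p - p.2 * P p + p.1 ^ 2 * Q p - p.1 * Q p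

/-- The left-hand side of equation (24), the second-order ODE cubic in the first
derivative associated with the planar system `dy/dx = Q/P`, evaluated with
`y = y(x)`, `y' = y'(x)`, `y'' = y''(x)`. -/
noncomputable def eq24LHS (P Q : ℝ × ℝ → ℝ) (x yx y1 y2 : ℝ) : ℝ :=
  y2
    + (x * (x - 1) * pdy P (x, yx)) / Delta P Q (x, yx) * y1 ^ 3
    + ((pdx P (x, yx) - pdy Q (x, yx)) * x ^ 2
        + (pdy Q (x, yx) - pdx P (x, yx) - 2 * P (x, yx)) * x
        + pdy P (x, yx) * yx ^ 2
        - (2 * P (x, yx) + pdy P (x, yx)) * yx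
        + 2 * P (x, yx)) / Delta P Q (x, yx) * y1 ^ 2
    + (-(pdx Q (x, yx)) * x ^ 2
        + (pdx Q (x, yx) + 2 * Q (x, yx)) * x
        + (pdx P (x, yx) - pdy Q (x, yx)) * yx ^ 2
        + (2 * Q (x, yx) - pdx P (x, yx) + pdy Q (x, yx)) * yx
        - 2 * Q (x, yx)) / Delta P Q (x, yx) * y1
    + (yx * (1 - yx) * pdx Q (x, yx)) / Delta P Q (x, yx)

/-- Every solution of the Petrovsky–Landis auxiliary equation
`dy/dx = −y(y−1)/(x(x−1))` on an open interval avoiding `0, 1` (with `Δ ≠ 0`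
along it) is twice differentiable and satisfies equation (24). -/
theorem stmt_10 (P Q : ℝ × ℝ → ℝ) (hP : ContDiff ℝ 1 P) (hQ : ContDiff ℝ 1 Q)
    (J : Set ℝ) (hJ : IsOpen J) (hJconn : IsPreconnected J)
    (hJ01 : ∀ x ∈ J, x ≠ 0 ∧ x ≠ 1)
    (y : ℝ → ℝ)
    (hy : ∀ x ∈ J, HasDerivAt y (-(y x) * (y x - 1) / (x * (x - 1))) x)
    (hΔ : ∀ x ∈ J, Delta P Q (x, y x) ≠ 0) :
    ∀ x ∈ J, ∃ y2 : ℝ,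
      HasDerivAt (deriv y) y2 x ∧
      eq24LHS P Q x (y x) (deriv y x) y2 = 0 := by
  intro x hx
  obtain ⟨hx0, hx1⟩ := hJ01 x hx
  have hx1' : x - 1 ≠ 0 := sub_ne_zero.mpr hx1
  have hv : x * (x - 1) ≠ 0 := mul_ne_zero hx0 hx1'
  have hyx := hy x hx
  set y1 : ℝ := -(y x) * (y x - 1) / (x * (x - 1)) with hy1
  have hN : HasDerivAt (fun t => -(y t) * (y t - 1))
      (-(y1 * (y x - 1) + y x * y1)) x := by
    have := (hyx.mul (hyx.sub_const 1)).neg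
    exact this.congr_of_eventuallyEq (Filter.Eventually.of_forall fun t => by simp [neg_mul])
  have hD : HasDerivAt (fun t : ℝ => t * (t - 1)) (1 * (x - 1) + x * 1) x :=
    (hasDerivAt_id x).mul ((hasDerivAt_id x).sub_const 1)
  have hg : HasDerivAt (fun t => -(y t) * (y t - 1) / (t * (t - 1)))
      ((-(y1 * (y x - 1) + y x * y1) * (x * (x - 1)) -
        -(y x) * (y x - 1) * (1 * (x - 1) + x * 1)) / (x * (x - 1)) ^ 2) x :=
    hN.div hD hv
  have heq : deriv y =ᶠ[nhds x] fun t => -(y t) * (y t - 1) / (t * (t - 1)) := by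
    filter_upwards [hJ.mem_nhds hx] with t ht
    exact (hy t ht).deriv
  have hg' : HasDerivAt (deriv y)
      ((-(y1 * (y x - 1) + y x * y1) * (x * (x - 1)) -
        -(y x) * (y x - 1) * (1 * (x - 1) + x * 1)) / (x * (x - 1)) ^ 2) x :=
    hg.congr_of_eventuallyEq heq
  refine ⟨_, hg', ?_⟩
  have hdy : deriv y x = y1 := hyx.deriv
  have hD0 : (y x) ^ 2 * P (x, y x) - y x * P (x, y x)
      + x ^ 2 * Q (x, y x) - x * Q (x, y x) ≠ 0 := hΔ x hx
  rw [hdy]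
  unfold eq24LHS Delta
  simp only
  rw [hy1]
  set D := (y x) ^ 2 * P (x, y x) - y x * P (x, y x)
      + x ^ 2 * Q (x, y x) - x * Q (x, y x) with hD
  field_simp
  rw [hD]
  ring
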